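/- arXiv:2109.11013 — 3 statements merged into one kernel-verified Lean document; each statement's English description precedes it below -/
import Mathlib

section
/- (Tupper's formula property, monochrome case n=2, m=1.) Let A_1, A_2 be positive integers, R = A_1 + A_2 + 1, and let S_1 ⊆ {0,…,A_1-1} × {0,…,A_2-1}. Define k = R · Σ_{(a,b)∈S_1} 2^{R²a + Rb + 1}. Then for all real x, y with 0 ≤ x < A_1 and k ≤ y < k + A_2: 1/2 < ⌊mod(⌊y/R⌋ · 2^{-R²⌊x⌋ - R·mod(⌊y⌋,R) - 1}, 2)⌋ if and only if (⌊x⌋, ⌊y - k⌋) ∈ S_1. -/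
lemma geom2 : ∀ n : ℕ, ∑ i ∈ Finset.range n, (2:ℤ)^i = 2^n - 1 := by
  intro n
  induction n with
  | zero => simp
  | succ n ih => rw [Finset.sum_range_succ, ih]; ring

lemma bit_aux (m : ℕ) (T : Finset (ℤ × ℤ)) (e : ℤ × ℤ → ℕ)
    (hne : ∀ p ∈ T, e p ≠ m) (hinj : Set.InjOn e T) (δ : ℤ) (hδ : δ = 0 ∨ δ = 1) :
    ((δ * 2 ^ m + ∑ p ∈ T, (2:ℤ) ^ e p) / 2 ^ m) % 2 = δ := by
  classical
  set Tlo := T.filter (fun p => e p < m) with hTlo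
  set Thi := T.filter (fun p => ¬ e p < m) with hThi
  have hsum : ∑ p ∈ T, (2:ℤ) ^ e p
      = (∑ p ∈ Tlo, (2:ℤ) ^ e p) + ∑ p ∈ Thi, (2:ℤ) ^ e p :=
    (Finset.sum_filter_add_sum_filter_not T _ _).symm
  -- L bound
  have hLnonneg : 0 ≤ ∑ p ∈ Tlo, (2:ℤ) ^ e p :=
    Finset.sum_nonneg fun p _ => by positivity
  have hLlt : ∑ p ∈ Tlo, (2:ℤ) ^ e p < 2 ^ m := by
    have himg : ∑ p ∈ Tlo, (2:ℤ) ^ e p = ∑ i ∈ Tlo.image e, (2:ℤ) ^ i := by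
      rw [Finset.sum_image]
      intro p hp q hq hpq
      exact hinj (Finset.mem_filter.1 hp).1 (Finset.mem_filter.1 hq).1 hpq
    have hsub : Tlo.image e ⊆ Finset.range m := by
      intro i hi
      obtain ⟨p, hp, rfl⟩ := Finset.mem_image.1 hi
      exact Finset.mem_range.2 (Finset.mem_filter.1 hp).2
    calc ∑ p ∈ Tlo, (2:ℤ) ^ e p = ∑ i ∈ Tlo.image e, (2:ℤ) ^ i := himg
      _ ≤ ∑ i ∈ Finset.range m, (2:ℤ) ^ i :=
          Finset.sum_le_sum_of_subset_of_nonneg hsub (fun i _ _ => by positivity)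
      _ = 2 ^ m - 1 := geom2 m
      _ < 2 ^ m := by omega
  -- H divisibility
  have hHdvd : (2:ℤ) ^ (m + 1) ∣ ∑ p ∈ Thi, (2:ℤ) ^ e p := by
    apply Finset.dvd_sum
    intro p hp
    have h1 : m + 1 ≤ e p := by
      have := (Finset.mem_filter.1 hp).2
      have := hne p (Finset.mem_filter.1 hp).1
      omega
    exact pow_dvd_pow 2 h1
  obtain ⟨h, hH⟩ := hHdvd
  have hHnonneg : 0 ≤ ∑ p ∈ Thi, (2:ℤ) ^ e p :=
    Finset.sum_nonneg fun p _ => by positivity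
  have hh0 : 0 ≤ h := by nlinarith [pow_pos (by norm_num : (0:ℤ) < 2) (m+1)]
  set L := ∑ p ∈ Tlo, (2:ℤ) ^ e p
  have key : δ * 2 ^ m + ∑ p ∈ T, (2:ℤ) ^ e p = L + 2 ^ m * (δ + 2 * h) := by
    rw [hsum, hH]; ring
  rw [key, Int.add_mul_ediv_left _ _ (by positivity : (2:ℤ)^m ≠ 0),
    Int.ediv_eq_zero_of_lt hLnonneg hLlt]
  omega

lemma inj_aux (R A₁ A₂ : ℕ) (hR : R = A₁ + A₂ + 1) (p q : ℤ × ℤ)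
    (hp : (0 ≤ p.1 ∧ p.1 < A₁) ∧ (0 ≤ p.2 ∧ p.2 < A₂))
    (hq : (0 ≤ q.1 ∧ q.1 < A₁) ∧ (0 ≤ q.2 ∧ q.2 < A₂))
    (h : ((R:ℤ)^2 * p.1 + R * p.2 + 1).toNat = ((R:ℤ)^2 * q.1 + R * q.2 + 1).toNat) :
    p = q := by
  have hRz : (R:ℤ) = (A₁:ℤ) + A₂ + 1 := by exact_mod_cast congrArg (Nat.cast : ℕ → ℤ) hR
  have hRpos : (0:ℤ) < R := by exact_mod_cast (by omega : 0 < R)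
  obtain ⟨⟨hp1, hp2⟩, hp3, hp4⟩ := hp
  obtain ⟨⟨hq1, hq2⟩, hq3, hq4⟩ := hq
  have hA₂R : (A₂:ℤ) < R := by omega
  have hpn : 0 ≤ (R:ℤ)^2 * p.1 + R * p.2 + 1 := by positivity
  have hqn : 0 ≤ (R:ℤ)^2 * q.1 + R * q.2 + 1 := by positivity
  have heq : (R:ℤ)^2 * p.1 + R * p.2 + 1 = (R:ℤ)^2 * q.1 + R * q.2 + 1 := by
    omega
  have h2 : (R:ℤ) * ((R:ℤ) * p.1 + p.2) = R * ((R:ℤ) * q.1 + q.2) := by ring_nf; nlinarith [heq]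
  have h3 : (R:ℤ) * p.1 + p.2 = (R:ℤ) * q.1 + q.2 :=
    mul_left_cancel₀ (by positivity) h2
  have h4 : (R:ℤ) * (p.1 - q.1) = q.2 - p.2 := by linarith
  have h5 : p.1 = q.1 := by
    rcases lt_trichotomy p.1 q.1 with hlt | heq | hgt
    · exfalso
      have : (R:ℤ) * (p.1 - q.1) ≤ R * (-1) := by
        apply mul_le_mul_of_nonneg_left (by omega) (le_of_lt hRpos)
      omega
    · exact heq
    · exfalso
      have : (R:ℤ) * 1 ≤ R * (p.1 - q.1) := by
        apply mul_le_mul_of_nonneg_left (by omega) (le_of_lt hRpos)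
      omega
  have h6 : p.2 = q.2 := by rw [h5] at h3; linarith
  exact Prod.ext h5 h6


set_option maxHeartbeats 1000000 in
theorem stmt_8 (A₁ A₂ : ℕ) (hA₁ : 0 < A₁) (hA₂ : 0 < A₂)
    (S₁ : Finset (ℤ × ℤ))
    (hS : ∀ p ∈ S₁, (0 ≤ p.1 ∧ p.1 < A₁) ∧ (0 ≤ p.2 ∧ p.2 < A₂)) :
    ∀ (R : ℕ), R = A₁ + A₂ + 1 →
    ∀ (k : ℤ), k = R * ∑ p ∈ S₁, 2 ^ ((R : ℤ)^2 * p.1 + R * p.2 + 1).toNat →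
    ∀ x y : ℝ, 0 ≤ x → x < A₁ → (k : ℝ) ≤ y → y < k + A₂ →
      ((1/2 : ℝ) <
        (⌊(⌊y / R⌋ : ℝ) * (2:ℝ) ^ (-(R:ℤ)^2 * ⌊x⌋ - R * (⌊y⌋ % R) - 1)
            - 2 * ⌊((⌊y / R⌋ : ℝ) * (2:ℝ) ^ (-(R:ℤ)^2 * ⌊x⌋ - R * (⌊y⌋ % R) - 1)) / 2⌋⌋ : ℝ)
        ↔ (⌊x⌋, ⌊y - k⌋) ∈ S₁) := by
  intro R hR k hk x y hx0 hx1 hyk hyk2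
  classical
  have hRpos : 0 < R := by omega
  have hRr : (0:ℝ) < R := by exact_mod_cast hRpos
  set N : ℤ := ∑ p ∈ S₁, 2 ^ ((R : ℤ)^2 * p.1 + R * p.2 + 1).toNat with hN
  set a : ℤ := ⌊x⌋ with ha
  set b : ℤ := ⌊y - (k:ℝ)⌋ with hb
  have ha0 : 0 ≤ a := Int.floor_nonneg.mpr hx0
  have ha1 : a < A₁ := by
    have : x < ((A₁:ℤ) : ℝ) := by push_cast; exact hx1
    exact_mod_cast Int.floor_lt.mpr this
  have hb0 : 0 ≤ b := Int.floor_nonneg.mpr (by linarith)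
  have hb1 : b < A₂ := by
    have : y - (k:ℝ) < ((A₂:ℤ) : ℝ) := by push_cast; linarith
    exact_mod_cast Int.floor_lt.mpr this
  have hbeq : b = ⌊y⌋ - k := by rw [hb, Int.floor_sub_intCast]
  have hfy : ⌊y⌋ = R * N + b := by omega
  have hA₂R : (A₂:ℤ) < R := by exact_mod_cast (by omega : A₂ < R)
  -- floor of y / R
  have hfloordiv : ⌊y / (R:ℝ)⌋ = N := by
    apply Int.floor_eq_iff.mpr
    constructor
    · rw [le_div_iff₀ hRr]
      have h1 : ((R:ℝ) * N : ℝ) = ((k:ℤ) : ℝ) := by rw [hk]; push_cast; ring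
      nlinarith [h1]
    · rw [div_lt_iff₀ hRr]
      have h1 : ((k:ℤ) : ℝ) + A₂ ≤ ((N:ℝ) + 1) * R := by
        have h2 : (A₂:ℝ) < R := by exact_mod_cast hA₂R
        rw [hk]; push_cast; nlinarith [h2]
      linarith
  -- emod
  have hemod : ⌊y⌋ % (R:ℤ) = b := by
    rw [hfy, add_comm, Int.add_mul_emod_self_left]
    exact Int.emod_eq_of_lt hb0 (by omega)
  rw [hfloordiv, hemod]
  -- exponent
  set ε : ℤ := (R:ℤ)^2 * a + R * b + 1 with hε
  have hε0 : 0 ≤ ε := by positivity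
  set m : ℕ := ε.toNat with hm
  have hmε : (m:ℤ) = ε := Int.toNat_of_nonneg hε0
  have hexp : -(R:ℤ)^2 * a - R * b - 1 = -ε := by rw [hε]; ring
  rw [hexp]
  -- real power
  have hpow : (2:ℝ) ^ (-ε) = ((2^m : ℤ) : ℝ)⁻¹ := by
    rw [zpow_neg, ← hmε, zpow_natCast]
    push_cast
    ring
  rw [hpow]
  -- integer division setup
  set P : ℤ := 2 ^ m with hP
  have hPpos : (0:ℤ) < P := by positivity
  have hPr : (0:ℝ) < (P:ℝ) := by exact_mod_cast hPpos
  set q : ℤ := N / P with hq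
  set r : ℤ := N % P with hr
  have hNqr : N = P * q + r := (Int.mul_ediv_add_emod N P).symm
  have hr0 : 0 ≤ r := Int.emod_nonneg N (ne_of_gt hPpos)
  have hrP : r < P := Int.emod_lt_of_pos N hPpos
  set c : ℤ := q % 2 with hc
  have hc01 : c = 0 ∨ c = 1 := by omega
  set s : ℤ := q / 2 with hs
  have hqsc : q = 2 * s + c := by omega
  -- real value
  have hu : (N:ℝ) * ((P:ℤ):ℝ)⁻¹ = (q:ℝ) + (r:ℝ) / (P:ℝ) := by
    rw [hNqr]
    push_cast
    field_simp
  have hrPr0 : (0:ℝ) ≤ (r:ℝ) / (P:ℝ) := by positivity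
  have hrPr1 : (r:ℝ) / (P:ℝ) < 1 := by
    rw [div_lt_one hPr]; exact_mod_cast hrP
  have hcr0 : (0:ℝ) ≤ (c:ℝ) := by rcases hc01 with h | h <;> simp [h]
  have hcr1 : (c:ℝ) ≤ 1 := by rcases hc01 with h | h <;> simp [h]
  have hfloor2 : ⌊((N:ℝ) * ((P:ℤ):ℝ)⁻¹) / 2⌋ = s := by
    apply Int.floor_eq_iff.mpr
    constructor
    · rw [hu]
      have : (q:ℝ) = 2 * s + c := by exact_mod_cast hqsc
      rw [this]; push_cast; linarith
    · rw [hu]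
      have : (q:ℝ) = 2 * s + c := by exact_mod_cast hqsc
      rw [this]; push_cast; linarith
  rw [hfloor2]
  have hfloor1 : ⌊(N:ℝ) * ((P:ℤ):ℝ)⁻¹ - 2 * (s:ℝ)⌋ = c := by
    apply Int.floor_eq_iff.mpr
    constructor
    · rw [hu]
      have : (q:ℝ) = 2 * s + c := by exact_mod_cast hqsc
      rw [this]; push_cast; linarith
    · rw [hu]
      have : (q:ℝ) = 2 * s + c := by exact_mod_cast hqsc
      rw [this]; push_cast; linarith
  rw [hfloor1]
  -- now: 1/2 < (c:ℝ) ↔ (a, b) ∈ S₁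
  -- bit computation
  have habS : (0 ≤ a ∧ a < A₁) ∧ (0 ≤ b ∧ b < A₂) := ⟨⟨ha0, ha1⟩, hb0, hb1⟩
  have heab : ((R:ℤ)^2 * a + R * b + 1).toNat = m := rfl
  have hcval : c = if (a, b) ∈ S₁ then 1 else 0 := by
    by_cases hmem : (a, b) ∈ S₁
    · rw [if_pos hmem]
      have hsplit : N = 1 * 2 ^ m + ∑ p ∈ S₁.erase (a, b),
          (2:ℤ) ^ ((R:ℤ)^2 * p.1 + R * p.2 + 1).toNat := by
        rw [one_mul, hN, ← Finset.add_sum_erase _ _ hmem, heab]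
      have := bit_aux m (S₁.erase (a, b)) (fun p => ((R:ℤ)^2 * p.1 + R * p.2 + 1).toNat)
        (fun p hp hpe => by
          have hpS : p ∈ S₁ := Finset.mem_of_mem_erase hp
          have : p = (a, b) := inj_aux R A₁ A₂ hR p (a, b) (hS p hpS) habS (by simpa using hpe.trans heab.symm)
          exact (Finset.ne_of_mem_erase hp) this)
        (fun p hp p' hp' hpp' =>
          inj_aux R A₁ A₂ hR p p' (hS p (Finset.mem_of_mem_erase hp))
            (hS p' (Finset.mem_of_mem_erase hp')) hpp')
        1 (Or.inr rfl)
      rw [hc, hq, hP, hsplit]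
      exact this
    · rw [if_neg hmem]
      have hsplit : N = 0 * 2 ^ m + ∑ p ∈ S₁,
          (2:ℤ) ^ ((R:ℤ)^2 * p.1 + R * p.2 + 1).toNat := by
        rw [zero_mul, zero_add, hN]
      have := bit_aux m S₁ (fun p => ((R:ℤ)^2 * p.1 + R * p.2 + 1).toNat)
        (fun p hp hpe => by
          have : p = (a, b) := inj_aux R A₁ A₂ hR p (a, b) (hS p hp) habS (by simpa using hpe.trans heab.symm)
          exact hmem (this ▸ hp))
        (fun p hp p' hp' hpp' =>
          inj_aux R A₁ A₂ hR p p' (hS p hp) (hS p' hp') hpp')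
        0 (Or.inl rfl)
      rw [hc, hq, hP, hsplit]
      exact this
  constructor
  · intro hlt
    by_contra hmem
    rw [hcval, if_neg hmem] at hlt
    norm_num at hlt
  · intro hmem
    rw [hcval, if_pos hmem]
    norm_num
end

section
/- (Main theorem.) Let n ≥ 2, m, A_1,…,A_n be positive integers and R = A_1 + ⋯ + A_n + m. For 1 ≤ i ≤ m define f_i(x_1,…,x_n) = ⌊mod(⌊x_n/R⌋ · 2^{-R^n⌊x_1⌋ - R^{n-1}⌊x_2⌋ - ⋯ - R²⌊x_{n-1}⌋ - R·mod(⌊x_n⌋,R) - i}, 2)⌋. Let S_1,…,S_m be pairwise disjoint subsets of ([0,A_1) × ⋯ × [0,A_n)) ∩ ℤⁿ, and set k = R · Σ_{j=1}^{m} Σ_{(m_1,…,m_n)∈S_j} 2^{R^n m_1 + R^{n-1} m_2 + ⋯ + R m_n + j}. Then for every 1 ≤ i ≤ m and every real tuple (x_1,…,x_n) with 0 ≤ x_ℓ < A_ℓ for ℓ < n and k ≤ x_n < k + A_n: 1/2 < f_i(x_1,…,x_n) if and only if (⌊x_1⌋, …, ⌊x_{n-1}⌋, ⌊x_n - k⌋)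 ∈ S_i. -/
lemma sum_range_two_pow (b : ℕ) : ∑ e ∈ Finset.range b, 2^e = 2^b - 1 := by
  induction b with
  | zero => simp
  | succ b ih => rw [Finset.sum_range_succ, ih]; have := Nat.one_le_two_pow (n := b); omega

lemma two_pow_sum_div_mod (F : Finset ℕ) (b : ℕ) :
    (∑ e ∈ F, 2^e) / 2^b % 2 = if b ∈ F then 1 else 0 := by
  classical
  have hsplit : (∑ e ∈ F, 2^e) =
      (∑ e ∈ F.filter (fun e => e < b), 2^e) + (∑ e ∈ F.filter (fun e => ¬ e < b), 2^e) :=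
    (Finset.sum_filter_add_sum_filter_not F _ _).symm
  have hsplit2 : (∑ e ∈ F.filter (fun e => ¬ e < b), 2^e) =
      (∑ e ∈ (F.filter (fun e => ¬ e < b)).filter (fun e => e = b), 2^e)
      + (∑ e ∈ (F.filter (fun e => ¬ e < b)).filter (fun e => ¬ e = b), 2^e) :=
    (Finset.sum_filter_add_sum_filter_not _ _ _).symm
  set lo := ∑ e ∈ F.filter (fun e => e < b), 2^e with hlo
  have hlo_lt : lo < 2^b := by
    have hsub : F.filter (fun e => e < b) ⊆ Finset.range b := by
      intro e he; simp only [Finset.mem_filter] at he; exact Finset.mem_range.2 he.2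
    have h1 : lo ≤ ∑ e ∈ Finset.range b, 2^e := Finset.sum_le_sum_of_subset hsub
    rw [sum_range_two_pow] at h1
    have h2 : 1 ≤ 2^b := Nat.one_le_two_pow
    omega
  have hmid : (F.filter (fun e => ¬ e < b)).filter (fun e => e = b) =
      if b ∈ F then {b} else ∅ := by
    split_ifs with hb
    · ext a
      simp only [Finset.mem_filter, Finset.mem_singleton]
      constructor
      · rintro ⟨_, h⟩; exact h
      · rintro rfl; exact ⟨⟨hb, lt_irrefl a⟩, rfl⟩
    · ext a
      simp only [Finset.mem_filter, Finset.notMem_empty, iff_false]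
      rintro ⟨⟨ha, _⟩, rfl⟩; exact hb ha
  have hhi : ∃ H, (∑ e ∈ (F.filter (fun e => ¬ e < b)).filter (fun e => ¬ e = b), 2^e)
      = 2^(b+1) * H := by
    refine ⟨∑ e ∈ (F.filter (fun e => ¬ e < b)).filter (fun e => ¬ e = b), 2^(e - (b+1)), ?_⟩
    rw [Finset.mul_sum]
    refine Finset.sum_congr rfl fun e he => ?_
    simp only [Finset.mem_filter] at he
    rw [← pow_add]
    congr 1
    omega
  obtain ⟨H, hH⟩ := hhi
  rw [hsplit, hsplit2, hH, hmid]
  split_ifs with hb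
  · rw [Finset.sum_singleton]
    have heq : lo + (2 ^ b + 2 ^ (b + 1) * H) = 2^b * (2*H + 1) + lo := by ring
    rw [heq, Nat.mul_add_div (Nat.pos_of_ne_zero (by positivity)), Nat.div_eq_of_lt hlo_lt]
    omega
  · rw [Finset.sum_empty]
    have heq : lo + (0 + 2 ^ (b + 1) * H) = 2^b * (2*H) + lo := by ring
    rw [heq, Nat.mul_add_div (Nat.pos_of_ne_zero (by positivity)), Nat.div_eq_of_lt hlo_lt]
    omega

lemma digits_inj (R : ℤ) : ∀ (q : ℕ) (f g : Fin q → ℤ),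
    (∀ i, 0 ≤ f i ∧ f i < R) → (∀ i, 0 ≤ g i ∧ g i < R) →
    (∑ i : Fin q, R ^ (i : ℕ) * f i) = (∑ i : Fin q, R ^ (i : ℕ) * g i) → f = g := by
  intro q
  induction q with
  | zero => intro f g _ _ _; funext i; exact absurd i.2 (Nat.not_lt_zero _)
  | succ q ih =>
    intro f g hf hg hsum
    have hR : 0 < R := lt_of_le_of_lt (hf 0).1 (hf 0).2
    have hrw : ∀ h : Fin (q+1) → ℤ, (∑ i : Fin (q+1), R ^ (i : ℕ) * h i)
        = h 0 + R * ∑ i : Fin q, R ^ (i : ℕ) * h i.succ := by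
      intro h
      rw [Fin.sum_univ_succ, Finset.mul_sum]
      simp only [Fin.val_zero, pow_zero, one_mul, Fin.val_succ]
      congr 1
      refine Finset.sum_congr rfl fun i _ => ?_
      rw [pow_succ]
      ring
    rw [hrw f, hrw g] at hsum
    have h0 : f 0 % R = f 0 := Int.emod_eq_of_lt (hf 0).1 (hf 0).2
    have h0' : g 0 % R = g 0 := Int.emod_eq_of_lt (hg 0).1 (hg 0).2
    have hkey : f 0 = g 0 := by
      have e1 : (f 0 + R * ∑ i : Fin q, R ^ (i : ℕ) * f i.succ) % R = f 0 := by
        rw [Int.add_mul_emod_self_left, h0]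
      have e2 : (g 0 + R * ∑ i : Fin q, R ^ (i : ℕ) * g i.succ) % R = g 0 := by
        rw [Int.add_mul_emod_self_left, h0']
      rw [← e1, ← e2, hsum]
    rw [hkey] at hsum
    have htail : (∑ i : Fin q, R ^ (i : ℕ) * f i.succ) = ∑ i : Fin q, R ^ (i : ℕ) * g i.succ :=
      mul_left_cancel₀ (ne_of_gt hR) (by omega)
    have := ih (fun i => f i.succ) (fun i => g i.succ) (fun i => hf i.succ) (fun i => hg i.succ) htail
    funext i
    cases i using Fin.cases with
    | zero => exact hkey
    | succ i => exact congrFun this i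

lemma floor_bit (K E : ℕ) :
    ⌊((K:ℝ)/2^E) - 2*⌊((K:ℝ)/2^E)/2⌋⌋ = ((K / 2^E % 2 : ℕ) : ℤ) := by
  have hpow : (0:ℝ) < 2^E := by positivity
  obtain ⟨q, r, hK, hrlt⟩ : ∃ q r : ℕ, K = q * 2^E + r ∧ r < 2^E :=
    ⟨K / 2^E, K % 2^E, by rw [Nat.div_add_mod'], Nat.mod_lt _ (by positivity)⟩
  have hdiv : K / 2^E = q := by
    rw [hK, Nat.add_comm, Nat.add_mul_div_right _ _ (by positivity : 0 < 2^E),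
      Nat.div_eq_of_lt hrlt, Nat.zero_add]
  obtain ⟨a, b, hqab, hb⟩ : ∃ a b : ℕ, q = 2*a + b ∧ b < 2 :=
    ⟨q / 2, q % 2, by omega, Nat.mod_lt _ (by norm_num)⟩
  have hmod : K / 2^E % 2 = b := by rw [hdiv]; omega
  rw [hmod]
  have hF0 : (0:ℝ) ≤ (r:ℝ)/2^E := by positivity
  have hF1 : (r:ℝ)/2^E < 1 := by
    rw [div_lt_one hpow]; exact_mod_cast hrlt
  have hX : (K:ℝ)/2^E = 2*(a:ℝ) + (b:ℝ) + (r:ℝ)/2^E := by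
    rw [hK, hqab]
    push_cast
    field_simp
  have hb1 : (b:ℝ) ≤ 1 := by exact_mod_cast Nat.lt_succ_iff.mp hb
  have hb0 : (0:ℝ) ≤ (b:ℝ) := by positivity
  have hfloor1 : ⌊((K:ℝ)/2^E)/2⌋ = (a : ℤ) := by
    rw [Int.floor_eq_iff, hX]
    push_cast
    constructor <;> nlinarith
  rw [hfloor1, hX, Int.floor_eq_iff]
  push_cast
  constructor <;> nlinarith

lemma enc_expand (n R : ℕ) (hn : 2 ≤ n) (c : ℤ) (v : Fin (n-1) → ℤ) (w : ℤ) :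
    (∑ ℓ : Fin (n-1), (R : ℤ) ^ (n - ℓ.val) * v ℓ) + ↑R * w + c
      = ∑ i : Fin (n-1+1+1), (R:ℤ) ^ (i : ℕ) *
          (Fin.cons c (Fin.cons w (fun i : Fin (n-1) => v i.rev) :
            Fin (n-1+1) → ℤ) : Fin (n-1+1+1) → ℤ) i := by
  rw [Fin.sum_univ_succ, Fin.sum_univ_succ]
  simp only [Fin.cons_zero, Fin.cons_succ, Fin.val_zero, pow_zero, one_mul, Fin.val_succ]
  have hrev : (∑ ℓ : Fin (n-1), (R : ℤ) ^ (n - ℓ.val) * v ℓ)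
      = ∑ i : Fin (n-1), (R:ℤ) ^ (i.val + 1 + 1) * v i.rev := by
    refine (Fintype.sum_equiv (Fin.revPerm) _ _ fun i => ?_).symm
    have h2 : i.val < n - 1 := i.2
    have hxp : n - (Fin.revPerm i : Fin (n-1)).val = i.val + 1 + 1 := by
      simp only [Fin.revPerm_apply, Fin.val_rev]
      omega
    rw [hxp]
    simp
  rw [hrev]
  push_cast
  ring

lemma enc_inj (n m R : ℕ) (hn : 2 ≤ n) (A : Fin (n-1) → ℕ) (Aₙ : ℕ)
    (hAR : ∀ ℓ, (A ℓ : ℤ) < R) (hAnR : (Aₙ : ℤ) < R) (hmR : (m : ℤ) < R)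
    (j j' : Fin m) (p p' : (Fin (n-1) → ℤ) × ℤ)
    (hp : (∀ ℓ, 0 ≤ p.1 ℓ ∧ p.1 ℓ < A ℓ) ∧ 0 ≤ p.2 ∧ p.2 < Aₙ)
    (hp' : (∀ ℓ, 0 ≤ p'.1 ℓ ∧ p'.1 ℓ < A ℓ) ∧ 0 ≤ p'.2 ∧ p'.2 < Aₙ)
    (heq : ((∑ ℓ : Fin (n-1), (R : ℤ) ^ (n - ℓ.val) * p.1 ℓ) + ↑R * p.2 + (↑j.val + 1)).toNat
       = ((∑ ℓ : Fin (n-1), (R : ℤ) ^ (n - ℓ.val) * p'.1 ℓ) + ↑R * p'.2 + (↑j'.val + 1)).toNat) :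
    j = j' ∧ p = p' := by
  have hR0 : (0:ℤ) ≤ R := Int.natCast_nonneg R
  have hnn : ∀ (jj : Fin m) (pp : (Fin (n-1) → ℤ) × ℤ),
      ((∀ ℓ, 0 ≤ pp.1 ℓ ∧ pp.1 ℓ < A ℓ) ∧ 0 ≤ pp.2 ∧ pp.2 < Aₙ) →
      0 ≤ (∑ ℓ : Fin (n-1), (R : ℤ) ^ (n - ℓ.val) * pp.1 ℓ) + ↑R * pp.2 + (↑jj.val + 1) := by
    intro jj pp hpp
    have h1 : 0 ≤ ∑ ℓ : Fin (n-1), (R : ℤ) ^ (n - ℓ.val) * pp.1 ℓ :=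
      Finset.sum_nonneg fun ℓ _ => mul_nonneg (pow_nonneg hR0 _) (hpp.1 ℓ).1
    have h2 : 0 ≤ (R:ℤ) * pp.2 := mul_nonneg hR0 hpp.2.1
    have h3 : (0:ℤ) ≤ ↑jj.val + 1 := by positivity
    omega
  have hieq : (∑ ℓ : Fin (n-1), (R : ℤ) ^ (n - ℓ.val) * p.1 ℓ) + ↑R * p.2 + (↑j.val + 1)
      = (∑ ℓ : Fin (n-1), (R : ℤ) ^ (n - ℓ.val) * p'.1 ℓ) + ↑R * p'.2 + (↑j'.val + 1) := by
    have := hnn j p hp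
    have := hnn j' p' hp'
    omega
  rw [enc_expand n R hn _ _ _, enc_expand n R hn _ _ _] at hieq
  have hbnd : ∀ (jj : Fin m) (pp : (Fin (n-1) → ℤ) × ℤ),
      ((∀ ℓ, 0 ≤ pp.1 ℓ ∧ pp.1 ℓ < A ℓ) ∧ 0 ≤ pp.2 ∧ pp.2 < Aₙ) →
      ∀ i : Fin (n-1+1+1),
        0 ≤ (Fin.cons (↑jj.val + 1) (Fin.cons pp.2 (fun i : Fin (n-1) => pp.1 i.rev) :
            Fin (n-1+1) → ℤ) : Fin (n-1+1+1) → ℤ) i ∧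
        (Fin.cons (↑jj.val + 1) (Fin.cons pp.2 (fun i : Fin (n-1) => pp.1 i.rev) :
            Fin (n-1+1) → ℤ) : Fin (n-1+1+1) → ℤ) i < R := by
    intro jj pp hpp i
    cases i using Fin.cases with
    | zero =>
      simp only [Fin.cons_zero]
      constructor
      · positivity
      · have : (jj.val : ℤ) < m := by exact_mod_cast jj.2
        omega
    | succ i =>
      cases i using Fin.cases with
      | zero =>
        simp only [Fin.cons_succ, Fin.cons_zero]
        exact ⟨hpp.2.1, lt_trans hpp.2.2 hAnR⟩
      | succ i =>
        simp only [Fin.cons_succ]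
        exact ⟨(hpp.1 i.rev).1, lt_trans (hpp.1 i.rev).2 (hAR i.rev)⟩
  have hff := digits_inj (R:ℤ) (n-1+1+1) _ _ (hbnd j p hp) (hbnd j' p' hp') hieq
  have h0 := congrFun hff 0
  simp only [Fin.cons_zero] at h0
  have hj : j = j' := by
    apply Fin.ext
    omega
  have h1 := congrFun hff (Fin.succ 0)
  simp only [Fin.cons_succ, Fin.cons_zero] at h1
  have h2 : ∀ ℓ : Fin (n-1), p.1 ℓ = p'.1 ℓ := by
    intro ℓ
    have := congrFun hff (Fin.succ (Fin.succ ℓ.rev))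
    simp only [Fin.cons_succ, Fin.rev_rev] at this
    exact this
  exact ⟨hj, Prod.ext (funext h2) h1⟩

def encA (n m R : ℕ) (z : (_ : Fin m) × ((Fin (n-1) → ℤ) × ℤ)) : ℕ :=
  ((∑ ℓ : Fin (n-1), (R : ℤ) ^ (n - ℓ.val) * z.2.1 ℓ) + ↑R * z.2.2 + (↑z.1.val + 1)).toNat

theorem stmt_9 (n m : ℕ) (hn : 2 ≤ n) (hm : 0 < m)
    (A : Fin (n-1) → ℕ) (Aₙ : ℕ) (hA : ∀ ℓ, 0 < A ℓ) (hAₙ : 0 < Aₙ)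
    (S : Fin m → Finset ((Fin (n-1) → ℤ) × ℤ))
    (hdisj : ∀ j j', j ≠ j' → Disjoint (S j) (S j'))
    (hS : ∀ j, ∀ p ∈ S j, (∀ ℓ, 0 ≤ p.1 ℓ ∧ p.1 ℓ < A ℓ) ∧ (0 ≤ p.2 ∧ p.2 < Aₙ)) :
    ∀ (R : ℕ), R = (∑ ℓ, A ℓ) + Aₙ + m →
    ∀ (k : ℤ), k = R * ∑ j : Fin m, ∑ p ∈ S j,
        2 ^ ((∑ ℓ : Fin (n-1), (R : ℤ) ^ (n - ℓ.val) * p.1 ℓ) + R * p.2 + (j.val + 1)).toNat →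
    ∀ (i : Fin m) (x : Fin (n-1) → ℝ) (y : ℝ),
      (∀ ℓ, 0 ≤ x ℓ ∧ x ℓ < A ℓ) → (k : ℝ) ≤ y → y < k + Aₙ →
      ((1/2 : ℝ) <
        (⌊(⌊y / R⌋ : ℝ) * (2:ℝ) ^ (-(∑ ℓ : Fin (n-1), (R:ℤ) ^ (n - ℓ.val) * ⌊x ℓ⌋)
              - R * (⌊y⌋ % R) - (i.val + 1))
          - 2 * ⌊((⌊y / R⌋ : ℝ) * (2:ℝ) ^ (-(∑ ℓ : Fin (n-1), (R:ℤ) ^ (n - ℓ.val) * ⌊x ℓ⌋)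
              - R * (⌊y⌋ % R) - (i.val + 1))) / 2⌋⌋ : ℝ)
        ↔ ((fun ℓ => ⌊x ℓ⌋), ⌊y - k⌋) ∈ S i) := by
  intro R hR k hk i x y hx hy1 hy2
  classical
  -- basic bounds
  have hAsum : ∀ ℓ, A ℓ ≤ ∑ ℓ', A ℓ' := fun ℓ =>
    Finset.single_le_sum (fun _ _ => Nat.zero_le _) (Finset.mem_univ ℓ)
  have hSA : 1 ≤ ∑ ℓ', A ℓ' := by
    have hℓ : A ⟨0, by omega⟩ ≤ ∑ ℓ', A ℓ' := hAsum _
    have := hA ⟨0, by omega⟩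
    omega
  have hAltR : ∀ ℓ, A ℓ < R := fun ℓ => by have := hAsum ℓ; omega
  have hAnltR : Aₙ < R := by omega
  have hmltR : m < R := by omega
  have hRpos : 0 < R := by omega
  -- Knat
  set Knat : ℕ := ∑ j : Fin m, ∑ p ∈ S j, 2 ^ encA n m R ⟨j, p⟩ with hKnat
  have hcast : (Knat : ℤ) = ∑ j : Fin m, ∑ p ∈ S j, (2:ℤ) ^ encA n m R ⟨j, p⟩ := by
    rw [hKnat]; push_cast; rfl
  have hkK : k = (R:ℤ) * (Knat:ℤ) := by rw [hcast]; exact hk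
  -- floor of y / R
  have hRr : (0:ℝ) < (R:ℝ) := by exact_mod_cast hRpos
  have hkR : ((k:ℝ)) = (R:ℝ) * (Knat:ℝ) := by rw [hkK]; push_cast; ring
  have hyfl : ⌊y / (R:ℝ)⌋ = (Knat:ℤ) := by
    rw [Int.floor_eq_iff]
    constructor
    · rw [le_div_iff₀ hRr]
      push_cast
      nlinarith [hy1]
    · rw [div_lt_iff₀ hRr]
      have hAnR : (Aₙ:ℝ) < (R:ℝ) := by exact_mod_cast hAnltR
      push_cast
      nlinarith [hy2]
  -- t
  set t := ⌊y - (k:ℝ)⌋ with htdef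
  have ht : t = ⌊y⌋ - k := by rw [htdef, Int.floor_sub_intCast]
  have h0t : 0 ≤ t := by
    have : k ≤ ⌊y⌋ := Int.le_floor.2 hy1
    omega
  have htA : t < Aₙ := by
    have : ⌊y⌋ < k + Aₙ := Int.floor_lt.2 (by push_cast; linarith [hy2])
    omega
  have htR : t < (R:ℤ) := by
    have : (Aₙ:ℤ) < R := by exact_mod_cast hAnltR
    omega
  have hmody : ⌊y⌋ % (R:ℤ) = t := by
    have hy : ⌊y⌋ = t + (R:ℤ) * (Knat:ℤ) := by rw [ht, hkK]; ring
    rw [hy, Int.add_mul_emod_self_left, Int.emod_eq_of_lt h0t htR]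
  -- z₀ and its bounds
  have hxbnd : ∀ ℓ, (0:ℤ) ≤ ⌊x ℓ⌋ ∧ ⌊x ℓ⌋ < A ℓ := by
    intro ℓ
    constructor
    · exact Int.floor_nonneg.2 (hx ℓ).1
    · exact Int.floor_lt.2 (by exact_mod_cast (hx ℓ).2)
  have hz₀bnd : (∀ ℓ, 0 ≤ (fun ℓ => ⌊x ℓ⌋) ℓ ∧ (fun ℓ => ⌊x ℓ⌋) ℓ < A ℓ) ∧ 0 ≤ t ∧ t < Aₙ :=
    ⟨hxbnd, h0t, htA⟩
  set E := encA n m R ⟨i, ((fun ℓ => ⌊x ℓ⌋), t)⟩ with hE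
  have heZnn : 0 ≤ (∑ ℓ : Fin (n-1), (R:ℤ) ^ (n - ℓ.val) * ⌊x ℓ⌋) + ↑R * t + (↑i.val + 1) := by
    have h1 : 0 ≤ ∑ ℓ : Fin (n-1), (R : ℤ) ^ (n - ℓ.val) * ⌊x ℓ⌋ :=
      Finset.sum_nonneg fun ℓ _ => mul_nonneg (pow_nonneg (Int.natCast_nonneg R) _) (hxbnd ℓ).1
    have h2 : 0 ≤ (R:ℤ) * t := mul_nonneg (Int.natCast_nonneg R) h0t
    positivity
  have hEeq : (∑ ℓ : Fin (n-1), (R:ℤ) ^ (n - ℓ.val) * ⌊x ℓ⌋) + ↑R * t + (↑i.val + 1) = (E:ℤ) :=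
    (Int.toNat_of_nonneg heZnn).symm
  -- rewrite the product
  have hprod : (⌊y / (R:ℝ)⌋ : ℝ) * (2:ℝ) ^ (-(∑ ℓ : Fin (n-1), (R:ℤ) ^ (n - ℓ.val) * ⌊x ℓ⌋)
      - (R:ℤ) * (⌊y⌋ % (R:ℤ)) - ((i.val:ℤ) + 1)) = (Knat:ℝ) / 2^E := by
    rw [hyfl, hmody]
    have hexp : -(∑ ℓ : Fin (n-1), (R:ℤ) ^ (n - ℓ.val) * ⌊x ℓ⌋) - (R:ℤ) * t - ((i.val:ℤ) + 1)
        = -(E:ℤ) := by rw [← hEeq]; ring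
    rw [hexp, zpow_neg, zpow_natCast, div_eq_mul_inv]
    push_cast
    ring
  rw [hprod, floor_bit Knat E]
  -- bit computation
  set T := (Finset.univ : Finset (Fin m)).sigma (fun j => S j) with hT
  have hTmem : ∀ z ∈ T, z.2 ∈ S z.1 := fun z hz => (Finset.mem_sigma.1 hz).2
  have hinj : ∀ z1 ∈ T, ∀ z2 ∈ T, encA n m R z1 = encA n m R z2 → z1 = z2 := by
    intro z1 hz1 z2 hz2 hzz
    obtain ⟨hj, hp⟩ := enc_inj n m R hn A Aₙ
      (fun ℓ => by exact_mod_cast hAltR ℓ) (by exact_mod_cast hAnltR) (by exact_mod_cast hmltR)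
      z1.1 z2.1 z1.2 z2.2 (hS _ _ (hTmem z1 hz1)) (hS _ _ (hTmem z2 hz2)) hzz
    exact Sigma.ext hj (heq_of_eq_of_heq hp (heq_of_eq rfl))
  have hKF : Knat = ∑ e ∈ T.image (encA n m R), 2^e := by
    rw [Finset.sum_image hinj, hT, Finset.sum_sigma]
  have hmem : E ∈ T.image (encA n m R) ↔ ((fun ℓ => ⌊x ℓ⌋, t) ∈ S i) := by
    constructor
    · intro h
      obtain ⟨z, hzT, hze⟩ := Finset.mem_image.1 h
      obtain ⟨hj, hp⟩ := enc_inj n m R hn A Aₙ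
        (fun ℓ => by exact_mod_cast hAltR ℓ) (by exact_mod_cast hAnltR) (by exact_mod_cast hmltR)
        z.1 i z.2 ((fun ℓ => ⌊x ℓ⌋), t) (hS _ _ (hTmem z hzT)) hz₀bnd hze
      rw [← hp, ← hj]
      exact hTmem z hzT
    · intro h
      exact Finset.mem_image.2 ⟨⟨i, ((fun ℓ => ⌊x ℓ⌋), t)⟩,
        Finset.mem_sigma.2 ⟨Finset.mem_univ _, h⟩, rfl⟩
  rw [hKF, two_pow_sum_div_mod]
  by_cases hc : ((fun ℓ => ⌊x ℓ⌋, t)) ∈ S i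
  · rw [if_pos (hmem.2 hc)]
    simp only [hc, iff_true]
    norm_num
  · rw [if_neg (fun h => hc (hmem.1 h))]
    simp only [hc, iff_false]
    norm_num
end

section
/- (Main theorem, case n=2.) Let m, A_1, A_2 be positive integers and R = A_1 + A_2 + m. For 1 ≤ i ≤ m define f_i(x,y) = ⌊mod(⌊y/R⌋ · 2^{-R²⌊x⌋ - R·mod(⌊y⌋,R) - i}, 2)⌋. Let S_1,…,S_m be pairwise disjoint subsets of {0,…,A_1-1} × {0,…,A_2-1} and k = R · Σ_{j=1}^{m} Σ_{(a,b)∈S_j} 2^{R²a + Rb + j}. Then for all real x, y with 0 ≤ x < A_1 and k ≤ y < k + A_2, and all 1 ≤ i ≤ m: 1/2 < f_i(x,y) if and only if (⌊x⌋, ⌊y - k⌋) ∈ S_i. -/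
lemma geom_two (e : ℕ) : ∑ s ∈ Finset.range e, 2 ^ s = 2 ^ e - 1 := by
  induction e with
  | zero => simp
  | succ n ih =>
    rw [Finset.sum_range_succ, ih, pow_succ]
    have : 1 ≤ 2 ^ n := Nat.one_le_two_pow
    omega

lemma sum_two_pow_lt {e : ℕ} {T : Finset ℕ} (h : ∀ s ∈ T, s < e) :
    (∑ s ∈ T, 2 ^ s) < 2 ^ e := by
  have h1 : (∑ s ∈ T, 2 ^ s) ≤ ∑ s ∈ Finset.range e, 2 ^ s :=
    Finset.sum_le_sum_of_subset (fun s hs => Finset.mem_range.2 (h s hs))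
  have h2 : 1 ≤ 2 ^ e := Nat.one_le_two_pow
  rw [geom_two] at h1
  omega

lemma key_div_mod (T : Finset ℕ) : ∀ e : ℕ,
    (∑ s ∈ T, 2 ^ s) / 2 ^ e % 2 = if e ∈ T then 1 else 0 := by
  classical
  induction T using Finset.strongInduction with
  | _ T ih =>
    intro e
    rcases T.eq_empty_or_nonempty with rfl | hne
    · simp
    obtain ⟨s, hs, hmax⟩ := T.exists_max_image id hne
    have herase : T = insert s (T.erase s) := (Finset.insert_erase hs).symm
    have hsum : ∑ t ∈ T, 2 ^ t = 2 ^ s + ∑ t ∈ T.erase s, 2 ^ t :=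
      (Finset.add_sum_erase T _ hs).symm
    have hLlt : (∑ t ∈ T.erase s, 2 ^ t) < 2 ^ s := by
      apply sum_two_pow_lt
      intro t ht
      have := hmax t (Finset.mem_of_mem_erase ht)
      have hne' := Finset.ne_of_mem_erase ht
      simp only [id] at this
      omega
    set L := ∑ t ∈ T.erase s, 2 ^ t with hL
    have ihL := ih (T.erase s) (Finset.erase_ssubset hs) e
    rcases lt_trichotomy e s with hlt | rfl | hgt
    · -- e < s
      have hds : 2 ^ s = 2 * 2 ^ (s - e - 1) * 2 ^ e := by
        obtain ⟨u, rfl⟩ : ∃ u, s = u + e + 1 := ⟨s - e - 1, by omega⟩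
        have hu : u + e + 1 - e - 1 = u := by omega
        rw [hu]; ring
      rw [hsum, hds, add_comm, Nat.add_mul_div_right _ _ (Nat.pow_pos (n := e) (by norm_num)),
        Nat.add_mul_mod_self_left, ihL]
      have : e ∈ T ↔ e ∈ T.erase s := by
        rw [Finset.mem_erase]
        constructor
        · exact fun h => ⟨by omega, h⟩
        · exact fun h => h.2
      exact if_congr this.symm rfl rfl
    · -- e = s
      rw [hsum, add_comm, Nat.add_div_right _ (Nat.pow_pos (n := e) (by norm_num)),
        Nat.div_eq_of_lt hLlt]
      simp [hs]
    · -- e > s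
      have hlt2 : (∑ t ∈ T, 2 ^ t) < 2 ^ e := by
        rw [hsum]
        calc 2 ^ s + L < 2 ^ s + 2 ^ s := by omega
        _ = 2 ^ (s+1) := by ring
        _ ≤ 2 ^ e := Nat.pow_le_pow_right (by norm_num) (by omega)
      rw [Nat.div_eq_of_lt hlt2]
      have : e ∉ T := fun h => by have := hmax e h; simp only [id] at this; omega
      simp [this]

lemma digit_unique {R a b c a' b' c' : ℕ} (hb : b < R) (hb' : b' < R) (hc : c < R) (hc' : c' < R)
    (h : R ^ 2 * a + R * b + c = R ^ 2 * a' + R * b' + c') : a = a' ∧ b = b' ∧ c = c' := by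
  have hR : 0 < R := by omega
  have h1 : R * (R * a + b) + c = R * (R * a' + b') + c' := by
    rw [show R * (R * a + b) + c = R ^ 2 * a + R * b + c by ring, h]; ring
  have hcc : c = c' := by
    have := congrArg (· % R) h1
    simpa [Nat.mul_add_mod, Nat.mod_eq_of_lt hc, Nat.mod_eq_of_lt hc'] using this
  have h2 : R * a + b = R * a' + b' := by
    have := congrArg (· / R) h1
    simpa [Nat.mul_add_div hR, Nat.div_eq_of_lt hc, Nat.div_eq_of_lt hc'] using this
  have hbb : b = b' := by
    have := congrArg (· % R) h2
    simpa [Nat.mul_add_mod, Nat.mod_eq_of_lt hb, Nat.mod_eq_of_lt hb'] using this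
  have haa : a = a' := by
    have := congrArg (· / R) h2
    simpa [Nat.mul_add_div hR, Nat.div_eq_of_lt hb, Nat.div_eq_of_lt hb'] using this
  exact ⟨haa, hbb, hcc⟩

lemma floor_nat_div (n d : ℕ) : ⌊(n : ℝ) / (d : ℝ)⌋ = ((n / d : ℕ) : ℤ) := by
  have h : (((n : ℚ) / (d : ℚ) : ℚ) : ℝ) = (n : ℝ) / (d : ℝ) := by push_cast; ring
  rw [← h, Rat.floor_cast, Rat.floor_natCast_div_natCast]
  exact (Int.natCast_ediv n d).symm

def Eexp (R : ℕ) (j : ℕ) (p : ℤ × ℤ) : ℕ := ((R : ℤ) ^ 2 * p.1 + R * p.2 + (j + 1)).toNat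

theorem stmt_10 (m A₁ A₂ : ℕ) (hm : 0 < m) (hA₁ : 0 < A₁) (hA₂ : 0 < A₂)
    (S : Fin m → Finset (ℤ × ℤ))
    (hdisj : ∀ j j', j ≠ j' → Disjoint (S j) (S j'))
    (hS : ∀ j, ∀ p ∈ S j, (0 ≤ p.1 ∧ p.1 < A₁) ∧ (0 ≤ p.2 ∧ p.2 < A₂)) :
    ∀ (R : ℕ), R = A₁ + A₂ + m →
    ∀ (k : ℤ), k = R * ∑ j : Fin m, ∑ p ∈ S j,
        2 ^ ((R : ℤ)^2 * p.1 + R * p.2 + (j.val + 1)).toNat →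
    ∀ (x y : ℝ) (i : Fin m), 0 ≤ x → x < A₁ → (k : ℝ) ≤ y → y < k + A₂ →
      ((1/2 : ℝ) <
        (⌊(⌊y / R⌋ : ℝ) * (2:ℝ) ^ (-(R:ℤ)^2 * ⌊x⌋ - R * (⌊y⌋ % R) - (i.val + 1))
          - 2 * ⌊((⌊y / R⌋ : ℝ) * (2:ℝ) ^ (-(R:ℤ)^2 * ⌊x⌋ - R * (⌊y⌋ % R) - (i.val + 1))) / 2⌋⌋ : ℝ)
        ↔ (⌊x⌋, ⌊y - k⌋) ∈ S i) := by
  classical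
  intro R hR k hk x y i hx hxA hky hyk
  have hRA₂ : A₂ < R := by omega
  have hRm : m < R := by omega
  have hR0 : 0 < R := by omega
  have hRpos : (0:ℝ) < R := by exact_mod_cast hR0
  -- floors of x and y - k
  have ha0 : 0 ≤ ⌊x⌋ := Int.floor_nonneg.2 hx
  have haA : ⌊x⌋ < (A₁ : ℤ) := Int.floor_lt.2 (by push_cast; exact hxA)
  have hb0 : 0 ≤ ⌊y - (k:ℝ)⌋ := Int.floor_nonneg.2 (by linarith)
  have hbA : ⌊y - (k:ℝ)⌋ < (A₂ : ℤ) := Int.floor_lt.2 (by push_cast; linarith)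
  set a : ℤ := ⌊x⌋ with ha_def
  set b : ℤ := ⌊y - (k:ℝ)⌋ with hb_def
  -- the exponent function on S j is as expected
  have hE : ∀ (j : Fin m), ∀ p ∈ S j,
      Eexp R j.1 p = R ^ 2 * p.1.toNat + R * p.2.toNat + (j.1 + 1) := by
    intro j p hp
    obtain ⟨⟨h1, _⟩, ⟨h3, _⟩⟩ := hS j p hp
    have h : (R:ℤ) ^ 2 * p.1 + R * p.2 + (j.1 + 1)
        = ((R ^ 2 * p.1.toNat + R * p.2.toNat + (j.1 + 1) : ℕ) : ℤ) := by
      push_cast [Int.toNat_of_nonneg h1, Int.toNat_of_nonneg h3]; ring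
    rw [Eexp, h, Int.toNat_natCast]
  -- the natural version of k / R
  set Knat : ℕ := ∑ j : Fin m, ∑ p ∈ S j, 2 ^ Eexp R j.1 p with hKnat_def
  have hkK : k = (R : ℤ) * (Knat : ℤ) := by
    rw [hk, hKnat_def]
    push_cast
    rfl
  -- Step A : ⌊y / R⌋ = Knat
  have hfloor1 : ⌊y / (R:ℝ)⌋ = (Knat : ℤ) := by
    rw [Int.floor_eq_iff]
    constructor
    · rw [le_div_iff₀ hRpos]
      have h1 : ((Knat : ℤ) : ℝ) * R = (k : ℝ) := by rw [hkK]; push_cast; ring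
      linarith
    · rw [div_lt_iff₀ hRpos]
      have h1 : ((Knat : ℤ) : ℝ) * R = (k : ℝ) := by rw [hkK]; push_cast; ring
      have h2 : (A₂ : ℝ) < R := by exact_mod_cast hRA₂
      have h3 : (((Knat : ℤ) : ℝ) + 1) * R = (k : ℝ) + R := by rw [← h1]; ring
      linarith
  -- Step B : ⌊y⌋ % R = b
  have hfloory : ⌊y⌋ = b + k := by
    conv_lhs => rw [show y = (y - (k:ℝ)) + (k:ℝ) by ring]
    rw [Int.floor_add_intCast]
  have hmod : ⌊y⌋ % (R:ℤ) = b := by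
    rw [hfloory, hkK, Int.add_mul_emod_self_left]
    exact Int.emod_eq_of_lt hb0 (lt_of_lt_of_le hbA (by exact_mod_cast hRA₂.le))
  -- Step C : the exponent
  set e : ℕ := R ^ 2 * a.toNat + R * b.toNat + (i.1 + 1) with he_def
  have hexp : -(R:ℤ)^2 * a - (R:ℤ) * (⌊y⌋ % (R:ℤ)) - ((i.1 : ℤ) + 1) = -(e : ℤ) := by
    rw [hmod, he_def]
    push_cast [Int.toNat_of_nonneg ha0, Int.toNat_of_nonneg hb0]
    ring
  -- z = Knat / 2^e
  have hz : (⌊y / (R:ℝ)⌋ : ℝ) * (2:ℝ) ^ (-(R:ℤ)^2 * a - (R:ℤ) * (⌊y⌋ % (R:ℤ)) - ((i.1 : ℤ) + 1))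
      = (Knat : ℝ) / 2 ^ e := by
    rw [hfloor1, hexp, zpow_neg, zpow_natCast]
    push_cast
    ring
  -- floors of Knat / 2^d
  have hq : ∀ d : ℕ, ⌊(Knat : ℝ) / 2 ^ d⌋ = ((Knat / 2 ^ d : ℕ) : ℤ) := by
    intro d
    rw [show ((2:ℝ) ^ d) = ((2 ^ d : ℕ) : ℝ) by push_cast; ring]
    exact floor_nat_div Knat (2 ^ d)
  set q : ℕ := Knat / 2 ^ e with hq_def
  have hzdiv : (Knat : ℝ) / 2 ^ e / 2 = (Knat : ℝ) / 2 ^ (e + 1) := by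
    rw [pow_succ]; ring
  have hfloorz2 : ⌊(Knat : ℝ) / 2 ^ e / 2⌋ = ((q / 2 : ℕ) : ℤ) := by
    rw [hzdiv, hq (e + 1), hq_def, Nat.div_div_eq_div_mul, pow_succ]
  -- the big floor expression equals q % 2
  have hbig : ⌊(Knat : ℝ) / 2 ^ e - 2 * (⌊(Knat : ℝ) / 2 ^ e / 2⌋ : ℝ)⌋ = ((q % 2 : ℕ) : ℤ) := by
    rw [hfloorz2,
      show (2 : ℝ) * (((q / 2 : ℕ) : ℤ) : ℝ) = (((2 * (q / 2) : ℕ) : ℤ) : ℝ) by push_cast; ring,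
      Int.floor_sub_intCast, hq e, ← hq_def]
    push_cast
    omega
  -- express Knat as a sum of distinct powers of two
  set T : Finset ℕ := ((Finset.univ : Finset (Fin m)).sigma fun j => S j).image
      (fun u : Σ _ : Fin m, ℤ × ℤ => Eexp R u.1.1 u.2) with hT_def
  have hinj : ∀ u ∈ (Finset.univ : Finset (Fin m)).sigma fun j => S j,
      ∀ v ∈ (Finset.univ : Finset (Fin m)).sigma fun j => S j,
      Eexp R u.1.1 u.2 = Eexp R v.1.1 v.2 → u = v := by
    rintro ⟨j, p1, p2⟩ hu ⟨j', p1', p2'⟩ hv huv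
    rw [Finset.mem_sigma] at hu hv
    obtain ⟨⟨hx1, hx1'⟩, hx2, hx2'⟩ := hS j _ hu.2
    obtain ⟨⟨hy1, hy1'⟩, hy2, hy2'⟩ := hS j' _ hv.2
    rw [hE j _ hu.2, hE j' _ hv.2] at huv
    simp only at huv hx1 hx1' hx2 hx2' hy1 hy1' hy2 hy2'
    have hb1 : p2.toNat < R := by omega
    have hb2 : p2'.toNat < R := by omega
    have hc1 : j.1 + 1 < R := by have := j.isLt; omega
    have hc2 : j'.1 + 1 < R := by have := j'.isLt; omega
    obtain ⟨e1, e2, e3⟩ := digit_unique hb1 hb2 hc1 hc2 huv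
    have hj : j = j' := Fin.ext (by omega)
    have hp1 : p1 = p1' := by omega
    have hp2 : p2 = p2' := by omega
    subst hj hp1 hp2
    rfl
  have hKT : Knat = ∑ s ∈ T, 2 ^ s := by
    rw [hT_def, Finset.sum_image hinj, Finset.sum_sigma]
  have hqmod : q % 2 = if e ∈ T then 1 else 0 := by
    rw [hq_def, hKT]
    exact key_div_mod T e
  -- membership
  have hmem : e ∈ T ↔ (a, b) ∈ S i := by
    constructor
    · intro h
      rw [hT_def, Finset.mem_image] at h
      obtain ⟨⟨j, p1, p2⟩, hu, hEq⟩ := h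
      rw [Finset.mem_sigma] at hu
      obtain ⟨-, hp⟩ := hu
      obtain ⟨⟨h1, h2⟩, h3, h4⟩ := hS j _ hp
      rw [hE j _ hp, he_def] at hEq
      simp only at hEq h1 h2 h3 h4
      have hb1 : p2.toNat < R := by omega
      have hb2 : b.toNat < R := by omega
      have hc1 : j.1 + 1 < R := by have := j.isLt; omega
      have hc2 : i.1 + 1 < R := by have := i.isLt; omega
      obtain ⟨e1, e2, e3⟩ := digit_unique hb1 hb2 hc1 hc2 hEq
      have hj : j = i := Fin.ext (by omega)
      have hp1 : p1 = a := by omega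
      have hp2 : p2 = b := by omega
      subst hj hp1 hp2
      exact hp
    · intro h
      rw [hT_def, Finset.mem_image]
      exact ⟨⟨i, (a, b)⟩, Finset.mem_sigma.2 ⟨Finset.mem_univ _, h⟩,
        (hE i (a, b) h).trans he_def.symm⟩
  -- conclude
  rw [hz, hbig]
  by_cases hin : (a, b) ∈ S i
  · rw [hqmod, if_pos (hmem.2 hin)]
    simp only [hin, iff_true]
    norm_num
  · rw [hqmod, if_neg (fun h => hin (hmem.1 h))]
    simp only [hin, iff_false]
    norm_num
end
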